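/- Let 0 < ε < 1/2 and α ∈ [0,1]. Let M'₁, M'₂ be matroids on a common finite ground set N' with weight function w : N' → ℝ, w(e) > 0 for all e, that are ε⁻¹-spread with weight classes N'_1, …, N'_k. For each j ∈ {1,…,k} let I'_j ⊆ N'_j be a set independent in both M'₁ and M'₂ such that ∑_{e∈I'_j} w(e) ≥ α · max{∑_{e∈T} w(e) : T ⊆ N'_j, T independent in both M'₁ and M'₂}. Then there exists a set I ⊆ ⋃_{j=1}^k I'_j that is independent in both M'₁ and M'₂ and satisfies ∑_{e∈I} w(e) ≥ α (1 − 4ε) · w(I*), where I* is a maximum weight common independent set of M'₁, M'₂. -/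

import Mathlib

open Finset

/-- A matroid on a finite ground set, given by its family of independent sets. -/
structure FinMatroid (α : Type*) [DecidableEq α] [Fintype α] where
  Indep : Finset α → Prop
  indep_empty : Indep ∅
  indep_subset : ∀ ⦃A B : Finset α⦄, A ⊆ B → Indep B → Indep A
  indep_exchange : ∀ ⦃A B : Finset α⦄, Indep A → Indep B → B.card < A.card →
    ∃ x ∈ A \ B, Indep (insert x B)

/-- The rank of a set `S` in a matroid: the size of a largest independent subset of `S`. -/
noncomputable def FinMatroid.rank {α : Type*} [DecidableEq α] [Fintype α]
    (M : FinMatroid α) (S : Finset α) : ℕ :=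
  sSup {n : ℕ | ∃ I ⊆ S, M.Indep I ∧ I.card = n}

/-- The rank of `S` with respect to an arbitrary independence predicate. -/
noncomputable def frank {β : Type*} (Ind : Finset β → Prop) (S : Finset β) : ℕ :=
  sSup {n : ℕ | ∃ I ⊆ S, Ind I ∧ I.card = n}

variable {α : Type*} [DecidableEq α] [Fintype α]

/-- The unfolded ground set `N = {(e,i) : e ∈ N', 1 ≤ i ≤ w e}`. -/
def unfoldGround (w : α → ℕ) : Finset (α × ℕ) :=
  Finset.univ.biUnion fun e => (Finset.Icc 1 (w e)).image fun i => (e, i)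

/-- The `i`-th layer projection `{e ∈ N' : (e,i) ∈ I}`. -/
def proj1 (I : Finset (α × ℕ)) (i : ℕ) : Finset α :=
  Finset.univ.filter fun e => (e, i) ∈ I

/-- The `i`-th reverse-layer projection `{e ∈ N' : (e, w e - i + 1) ∈ I}`. -/
def proj2 (w : α → ℕ) (I : Finset (α × ℕ)) (i : ℕ) : Finset α :=
  Finset.univ.filter fun e => i ≤ w e ∧ (e, w e - i + 1) ∈ I

/-- Independence in the unfolded matroid `M₁`. -/
def UnfoldIndep1 (M' : FinMatroid α) (w : α → ℕ) (W : ℕ) (I : Finset (α × ℕ)) : Prop :=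
  I ⊆ unfoldGround w ∧ ∀ i ∈ Finset.Icc 1 W, M'.Indep (proj1 I i)

/-- Independence in the unfolded matroid `M₂`. -/
def UnfoldIndep2 (M' : FinMatroid α) (w : α → ℕ) (W : ℕ) (I : Finset (α × ℕ)) : Prop :=
  I ⊆ unfoldGround w ∧ ∀ i ∈ Finset.Icc 1 W, M'.Indep (proj2 w I i)

/-- The unfolding `{(e,i) : e ∈ S', 1 ≤ i ≤ w e}` of a set `S' ⊆ N'`. -/
def unfoldSet (w : α → ℕ) (S' : Finset α) : Finset (α × ℕ) :=
  S'.biUnion fun e => (Finset.Icc 1 (w e)).image fun i => (e, i)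

lemma extend_indep (M : FinMatroid α) {A B : Finset α} (hA : M.Indep A) (hB : M.Indep B) :
    ∃ S ⊆ B, M.Indep (A ∪ S) ∧ B.card ≤ S.card + A.card := by
  classical
  obtain ⟨C, hCmem, hmax⟩ := Finset.exists_max_image
    (((A ∪ B).powerset).filter fun C => A ⊆ C ∧ M.Indep C) Finset.card
    ⟨A, Finset.mem_filter.2 ⟨Finset.mem_powerset.2 Finset.subset_union_left, Finset.Subset.refl A, hA⟩⟩
  simp only [Finset.mem_filter, Finset.mem_powerset] at hCmem
  obtain ⟨hCsub, hAC, hCind⟩ := hCmem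
  have hBC : B.card ≤ C.card := by
    by_contra h
    push_neg at h
    obtain ⟨x, hx, hxind⟩ := M.indep_exchange hB hCind h
    have hxB : x ∈ B := (Finset.mem_sdiff.1 hx).1
    have hxC : x ∉ C := (Finset.mem_sdiff.1 hx).2
    have : (insert x C).card ≤ C.card := hmax _ (by
      simp only [Finset.mem_filter, Finset.mem_powerset]
      exact ⟨Finset.insert_subset (Finset.mem_union_right _ hxB) hCsub,
        hAC.trans (Finset.subset_insert _ _), hxind⟩)
    rw [Finset.card_insert_of_notMem hxC] at this
    omega
  refine ⟨C \ A, ?_, ?_, ?_⟩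
  · intro x hx
    rcases Finset.mem_sdiff.1 hx with ⟨hxC, hxA⟩
    rcases Finset.mem_union.1 (hCsub hxC) with h | h
    · exact absurd h hxA
    · exact h
  · rwa [Finset.union_sdiff_of_subset hAC]
  · have := Finset.card_sdiff_of_subset hAC
    have := Finset.card_le_card hAC
    omega

lemma extend_indep2 (M₁ M₂ : FinMatroid α) {A B : Finset α}
    (hA1 : M₁.Indep A) (hA2 : M₂.Indep A) (hB1 : M₁.Indep B) (hB2 : M₂.Indep B) :
    ∃ S ⊆ B, M₁.Indep (A ∪ S) ∧ M₂.Indep (A ∪ S) ∧ B.card ≤ S.card + 2 * A.card := by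
  obtain ⟨S₁, hS₁B, hS₁i, hS₁c⟩ := extend_indep M₁ hA1 hB1
  obtain ⟨S₂, hS₂B, hS₂i, hS₂c⟩ := extend_indep M₂ hA2 hB2
  refine ⟨S₁ ∩ S₂, (Finset.inter_subset_left).trans hS₁B, ?_, ?_, ?_⟩
  · exact M₁.indep_subset (Finset.union_subset_union_right Finset.inter_subset_left) hS₁i
  · exact M₂.indep_subset (Finset.union_subset_union_right Finset.inter_subset_right) hS₂i
  · have h1 := Finset.card_union_add_card_inter S₁ S₂
    have h2 : (S₁ ∪ S₂).card ≤ B.card := Finset.card_le_card (Finset.union_subset hS₁B hS₂B)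
    omega

/-- merging `a`-approximate common independent sets of the weight
classes of an `ε⁻¹`-spread instance yields an `a(1 - 4ε)`-approximate common
independent set of the whole instance. -/
theorem spread_greedy_merge_approx (ε a : ℝ) (hε0 : 0 < ε) (hε : ε < 1/2)
    (ha0 : 0 ≤ a) (ha1 : a ≤ 1)
    (M'₁ M'₂ : FinMatroid α) (w : α → ℝ) (hw : ∀ e : α, 0 < w e)
    (k : ℕ) (l r : ℕ → ℝ)
    (hlr : ∀ j < k, 0 < l j ∧ l j ≤ r j)
    (hgap : ∀ j, j + 1 < k → r j / ε < l (j + 1))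
    (hpart : ∀ e : α, ∃ j < k, l j ≤ w e ∧ w e ≤ r j)
    (I' : ℕ → Finset α)
    (hI'sub : ∀ j < k, ∀ e ∈ I' j, l j ≤ w e ∧ w e ≤ r j)
    (hI'ind : ∀ j < k, M'₁.Indep (I' j) ∧ M'₂.Indep (I' j))
    (hI'apx : ∀ j < k, ∀ T : Finset α, (∀ e ∈ T, l j ≤ w e ∧ w e ≤ r j) →
      M'₁.Indep T → M'₂.Indep T → a * ∑ e ∈ T, w e ≤ ∑ e ∈ I' j, w e) :
    ∃ I ⊆ (Finset.range k).biUnion I', M'₁.Indep I ∧ M'₂.Indep I ∧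
      ∀ Istar : Finset α, M'₁.Indep Istar → M'₂.Indep Istar →
        a * (1 - 4 * ε) * ∑ e ∈ Istar, w e ≤ ∑ e ∈ I, w e := by
  classical
  have hε1 : ε < 1 := by linarith
  have hr_pos : ∀ j, j < k → 0 < r j := fun j hj => lt_of_lt_of_le (hlr j hj).1 (hlr j hj).2
  have hr_le : ∀ j j', j < j' → j' < k → r j ≤ ε ^ (j' - j) * l j' := by
    intro j j' hjj' hj'k
    induction j' with
    | zero => omega
    | succ n ih =>
      have hgap' : r n < ε * l (n + 1) := by
        have h := hgap n hj'k
        rw [div_lt_iff₀ hε0] at h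
        linarith
      rcases Nat.lt_or_ge j n with h | h
      · have hn : n < k := by omega
        have h1 : r j ≤ ε ^ (n - j) * l n := ih h hn
        have h2 : l n ≤ r n := (hlr n hn).2
        have hpw : (0:ℝ) ≤ ε ^ (n - j) := pow_nonneg hε0.le _
        have h3 : r j ≤ ε ^ (n - j) * (ε * l (n + 1)) := by
          calc r j ≤ ε ^ (n - j) * l n := h1
            _ ≤ ε ^ (n - j) * r n := by nlinarith
            _ ≤ ε ^ (n - j) * (ε * l (n + 1)) := by nlinarith
        have he : n + 1 - j = (n - j) + 1 := by omega
        rw [he, pow_succ]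
        linarith [h3]
      · have hjn : j = n := by omega
        subst hjn
        have he : j + 1 - j = 1 := by omega
        rw [he, pow_one]
        linarith
  have hrl : ∀ i j, i < j → j < k → r i < l j := by
    intro i j hij hjk
    have h1 := hr_le i j hij hjk
    have h2 : ε ^ (j - i) < 1 := pow_lt_one₀ hε0.le hε1 (by omega)
    have h3 := (hlr j hjk).1
    nlinarith
  have hr_mono : ∀ i j, i ≤ j → j < k → r i ≤ r j := by
    intro i j hij hjk
    rcases Nat.eq_or_lt_of_le hij with h | h
    · rw [h]
    · exact le_of_lt (lt_of_lt_of_le (hrl i j h hjk) (hlr j hjk).2)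
  have hgeom : ∀ c, c < k → ∑ j ∈ Finset.range c, r j ≤ 2 * ε * l c := by
    intro c hck
    have hgs : ∑ j ∈ Finset.range c, ε ^ (c - j) ≤ 2 * ε := by
      have h1 : ∑ j ∈ Finset.range c, ε ^ (c - j) = ∑ j ∈ Finset.range c, ε ^ (j + 1) := by
        rw [← Finset.sum_range_reflect (fun j => ε ^ (j + 1)) c]
        apply Finset.sum_congr rfl
        intro j hj
        have := Finset.mem_range.1 hj
        congr 1
        omega
      have h2 : ∑ j ∈ Finset.range c, ε ^ (j + 1) = ε * ∑ j ∈ Finset.range c, ε ^ j := by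
        rw [Finset.mul_sum]
        apply Finset.sum_congr rfl
        intro j _
        rw [pow_succ]
        ring
      have h3 : ∑ j ∈ Finset.range c, ε ^ j ≤ 2 := by
        rw [geom_sum_eq hε1.ne c]
        rw [div_le_iff_of_neg (by linarith : ε - 1 < 0)]
        have : (0:ℝ) ≤ ε ^ c := pow_nonneg hε0.le c
        nlinarith
      rw [h1, h2]
      nlinarith
    calc ∑ j ∈ Finset.range c, r j
        ≤ ∑ j ∈ Finset.range c, ε ^ (c - j) * l c := by
          apply Finset.sum_le_sum
          intro j hj
          exact hr_le j c (Finset.mem_range.1 hj) hck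
      _ = (∑ j ∈ Finset.range c, ε ^ (c - j)) * l c := by rw [Finset.sum_mul]
      _ ≤ 2 * ε * l c := by
          apply mul_le_mul_of_nonneg_right hgs (hlr c hck).1.le
  have hcharge : ∀ (e : α) (c : ℕ), c < k → l c ≤ w e → w e ≤ r c →
      ∑ j ∈ Finset.range k, (if r j < w e then 2 * r j else 0) ≤ 4 * ε * w e := by
    intro e c hck hlc hrc
    have hsplit := Finset.sum_range_add_sum_Ico
      (fun j => if r j < w e then 2 * r j else 0) hck.le
    have hzero : ∑ j ∈ Finset.Ico c k, (if r j < w e then 2 * r j else 0) = 0 := by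
      apply Finset.sum_eq_zero
      intro j hj
      rcases Finset.mem_Ico.1 hj with ⟨h1, h2⟩
      have : ¬ (r j < w e) := not_lt.2 (hrc.trans (hr_mono c j h1 h2))
      simp [this]
    have hle : ∑ j ∈ Finset.range c, (if r j < w e then 2 * r j else 0)
        ≤ ∑ j ∈ Finset.range c, 2 * r j := by
      apply Finset.sum_le_sum
      intro j hj
      have := hr_pos j (lt_trans (Finset.mem_range.1 hj) hck)
      split <;> linarith
    have h2 : ∑ j ∈ Finset.range c, 2 * r j = 2 * ∑ j ∈ Finset.range c, r j := by
      rw [Finset.mul_sum]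
    have h3 := hgeom c hck
    rw [← hsplit, hzero]
    nlinarith
  have key : ∀ n, n ≤ k → ∃ I, I ⊆ (Finset.Ico (k - n) k).biUnion I' ∧
      M'₁.Indep I ∧ M'₂.Indep I ∧
      ∑ j ∈ Finset.Ico (k - n) k, ∑ e ∈ I' j, w e ≤
        ∑ e ∈ I, w e +
          ∑ e ∈ I, ∑ j ∈ Finset.Ico (k - n) k, (if r j < w e then 2 * r j else 0) := by
    intro n
    induction n with
    | zero =>
      intro _
      refine ⟨∅, by simp, M'₁.indep_empty, M'₂.indep_empty, by simp⟩
    | succ n ih =>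
      intro hn1
      obtain ⟨I, hIsub, hI1, hI2, hIineq⟩ := ih (by omega)
      set m := k - (n + 1) with hm
      have hmk : m < k := by omega
      have hsucc : k - n = m + 1 := by omega
      rw [hsucc] at hIsub hIineq
      obtain ⟨S, hSB, hUS1, hUS2, hcard⟩ :=
        extend_indep2 M'₁ M'₂ hI1 hI2 (hI'ind m hmk).1 (hI'ind m hmk).2
      have hwI : ∀ e ∈ I, r m < w e := by
        intro e he
        obtain ⟨j', hj', hej'⟩ := Finset.mem_biUnion.1 (hIsub he)
        rcases Finset.mem_Ico.1 hj' with ⟨h1, h2⟩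
        exact lt_of_lt_of_le (hrl m j' (by omega) h2) (hI'sub j' h2 e hej').1
      have hdisj : Disjoint I S := by
        rw [Finset.disjoint_left]
        intro e heI heS
        exact absurd ((hI'sub m hmk e (hSB heS)).2) (not_le.2 (hwI e heI))
      have hsum_union : ∀ f : α → ℝ, ∑ e ∈ I ∪ S, f e = ∑ e ∈ I, f e + ∑ e ∈ S, f e :=
        fun f => Finset.sum_union hdisj
      have hwIm : ∑ e ∈ I' m, w e ≤ ∑ e ∈ S, w e + 2 * (I.card : ℝ) * r m := by
        have h1 : ∑ e ∈ I' m \ S, w e + ∑ e ∈ S, w e = ∑ e ∈ I' m, w e :=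
          Finset.sum_sdiff hSB
        have h2 : ∑ e ∈ I' m \ S, w e ≤ ((I' m \ S).card : ℝ) * r m := by
          have := Finset.sum_le_card_nsmul (I' m \ S) w (r m)
            (fun e he => (hI'sub m hmk e (Finset.mem_sdiff.1 he).1).2)
          rwa [nsmul_eq_mul] at this
        have h3 : (I' m \ S).card ≤ 2 * I.card := by
          have := Finset.card_sdiff_of_subset hSB
          omega
        have h4 : ((I' m \ S).card : ℝ) * r m ≤ (2 * (I.card : ℝ)) * r m := by
          apply mul_le_mul_of_nonneg_right _ (hr_pos m hmk).le
          exact_mod_cast h3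
        linarith
      have hIeq : ∑ e ∈ I, ∑ j ∈ Finset.Ico m k, (if r j < w e then 2 * r j else 0)
          = ∑ e ∈ I, (2 * r m + ∑ j ∈ Finset.Ico (m + 1) k, (if r j < w e then 2 * r j else 0)) := by
        apply Finset.sum_congr rfl
        intro e he
        rw [Finset.sum_eq_sum_Ico_succ_bot hmk]
        congr 1
        simp [hwI e he]
      have hS0 : 0 ≤ ∑ e ∈ S, ∑ j ∈ Finset.Ico m k, (if r j < w e then 2 * r j else 0) := by
        apply Finset.sum_nonneg
        intro e _
        apply Finset.sum_nonneg
        intro j hj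
        have := hr_pos j (Finset.mem_Ico.1 hj).2
        split <;> linarith
      have hsplitI : ∑ e ∈ I, (2 * r m + ∑ j ∈ Finset.Ico (m + 1) k, (if r j < w e then 2 * r j else 0))
          = 2 * (I.card : ℝ) * r m
            + ∑ e ∈ I, ∑ j ∈ Finset.Ico (m + 1) k, (if r j < w e then 2 * r j else 0) := by
        rw [Finset.sum_add_distrib, Finset.sum_const, nsmul_eq_mul]
        ring
      refine ⟨I ∪ S, ?_, hUS1, hUS2, ?_⟩
      · intro e he
        rcases Finset.mem_union.1 he with h | h
        · obtain ⟨j', hj', hej'⟩ := Finset.mem_biUnion.1 (hIsub h)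
          rcases Finset.mem_Ico.1 hj' with ⟨h1, h2⟩
          exact Finset.mem_biUnion.2 ⟨j', Finset.mem_Ico.2 ⟨by omega, h2⟩, hej'⟩
        · exact Finset.mem_biUnion.2 ⟨m, Finset.mem_Ico.2 ⟨le_refl m, hmk⟩, hSB h⟩
      · rw [Finset.sum_eq_sum_Ico_succ_bot hmk (fun j => ∑ e ∈ I' j, w e)]
        rw [hsum_union w, hsum_union (fun e => ∑ j ∈ Finset.Ico m k, (if r j < w e then 2 * r j else 0))]
        rw [hIeq, hsplitI]
        linarith
  obtain ⟨I, hIsub, hI1, hI2, hIineq⟩ := key k (le_refl k)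
  rw [Nat.sub_self] at hIsub hIineq
  have hIco0 : Finset.Ico 0 k = Finset.range k := by rw [Finset.range_eq_Ico]
  rw [hIco0] at hIsub hIineq
  refine ⟨I, hIsub, hI1, hI2, ?_⟩
  intro Istar hs1 hs2
  have hwInn : 0 ≤ ∑ e ∈ I, w e := Finset.sum_nonneg fun e _ => (hw e).le
  have hchg4 : ∑ e ∈ I, ∑ j ∈ Finset.range k, (if r j < w e then 2 * r j else 0)
      ≤ 4 * ε * ∑ e ∈ I, w e := by
    calc ∑ e ∈ I, ∑ j ∈ Finset.range k, (if r j < w e then 2 * r j else 0)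
        ≤ ∑ e ∈ I, 4 * ε * w e := by
          apply Finset.sum_le_sum
          intro e he
          obtain ⟨j', hj', hej'⟩ := Finset.mem_biUnion.1 (hIsub he)
          have hj'k := Finset.mem_range.1 hj'
          exact hcharge e j' hj'k (hI'sub j' hj'k e hej').1 (hI'sub j' hj'k e hej').2
      _ = 4 * ε * ∑ e ∈ I, w e := by rw [Finset.mul_sum]
  set T : ℕ → Finset α := fun j => Istar.filter (fun e => l j ≤ w e ∧ w e ≤ r j) with hT
  have hTsub : ∀ j, T j ⊆ Istar := fun j => Finset.filter_subset _ _
  have hIstar_eq : Istar = (Finset.range k).biUnion T := by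
    ext e
    simp only [hT, Finset.mem_biUnion, Finset.mem_filter, Finset.mem_range]
    constructor
    · intro he
      obtain ⟨j, hj, h1, h2⟩ := hpart e
      exact ⟨j, hj, he, h1, h2⟩
    · rintro ⟨j, _, he, _⟩
      exact he
  have hTdisj : (↑(Finset.range k) : Set ℕ).PairwiseDisjoint T := by
    intro i hi j hj hij
    simp only [Finset.coe_range, Set.mem_Iio] at hi hj
    simp only [Function.onFun]
    rw [Finset.disjoint_left]
    intro e hei hej
    simp only [hT, Finset.mem_filter] at hei hej
    rcases Nat.lt_or_ge i j with h | h
    · linarith [hei.2.2, hrl i j h hj, hej.2.1]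
    · have h' : j < i := by omega
      linarith [hej.2.2, hrl j i h' hi, hei.2.1]
  have hsplitstar : ∑ e ∈ Istar, w e = ∑ j ∈ Finset.range k, ∑ e ∈ T j, w e := by
    conv_lhs => rw [hIstar_eq]
    exact Finset.sum_biUnion hTdisj
  have hapx : a * ∑ e ∈ Istar, w e ≤ ∑ j ∈ Finset.range k, ∑ e ∈ I' j, w e := by
    rw [hsplitstar, Finset.mul_sum]
    apply Finset.sum_le_sum
    intro j hj
    have hjk := Finset.mem_range.1 hj
    exact hI'apx j hjk (T j) (fun e he => (Finset.mem_filter.1 he).2)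
      (M'₁.indep_subset (hTsub j) hs1) (M'₂.indep_subset (hTsub j) hs2)
  have hstar_nn : 0 ≤ ∑ e ∈ Istar, w e := Finset.sum_nonneg fun e _ => (hw e).le
  rcases le_or_gt (1 - 4 * ε) 0 with h | h
  · nlinarith [mul_nonneg ha0 hstar_nn]
  · have hSig : ∑ j ∈ Finset.range k, ∑ e ∈ I' j, w e ≤ (1 + 4 * ε) * ∑ e ∈ I, w e := by
      linarith
    have h5 : (1 - 4 * ε) * (a * ∑ e ∈ Istar, w e)
        ≤ (1 - 4 * ε) * ((1 + 4 * ε) * ∑ e ∈ I, w e) :=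
      mul_le_mul_of_nonneg_left (hapx.trans hSig) h.le
    nlinarith [h5, mul_nonneg (mul_nonneg hε0.le hε0.le) hwInn]
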